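/- arXiv:cond-mat/0603243 — 7 statements merged into one kernel-verified Lean document; each statement's English description precedes it below -/
import Mathlib

section
/- Let N ≥ 2, n ≥ 1, α : Fin n → Fin n → ℝ, and let λ : Fin n → Fin n → ℝ be strictly positive transition rates satisfying α(k,l) − α(l,k) = log(λ(k,l)/λ(l,k)) for all k, l. For a configuration X : Fin N → Fin n let H(X) = Σ_{i<j} α(X_i, X_j). If X has X_i = k, X_{i+1} = l at adjacent sites i, i+1 and X' is obtained from X by swapping these two values, then the detailed balance relation exp(−H(X)) · λ(k,l) = exp(−H(X')) · λ(l,k) holds. -/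
open Finset

/-- Energy of a configuration of the `n`-letter exclusion model on `N` sites:
`H(X) = ∑_{i<j} α(X i, X j)`. -/
noncomputable def energy {N n : ℕ} (α : Fin n → Fin n → ℝ) (X : Fin N → Fin n) : ℝ :=
  ∑ p ∈ Finset.univ.filter (fun p : Fin N × Fin N => p.1 < p.2), α (X p.1) (X p.2)

set_option maxHeartbeats 1000000 in
/-- Detailed balance for the Gibbs weight `exp(−H)` with rates satisfying
`α(k,l) − α(l,k) = log(λ(k,l)/λ(l,k))`: if `X'` is obtained from `X` by swapping the
letters `k`, `l` at adjacent sites, then `exp(−H(X))·λ(k,l) = exp(−H(X'))·λ(l,k)`. -/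
theorem detailed_balance_swap (N n : ℕ) (hN : 2 ≤ N) (hn : 1 ≤ n)
    (α : Fin n → Fin n → ℝ) (lam : Fin n → Fin n → ℝ)
    (hpos : ∀ k l : Fin n, 0 < lam k l)
    (hrate : ∀ k l : Fin n, α k l - α l k = Real.log (lam k l / lam l k))
    (X X' : Fin N → Fin n)
    (i : ℕ) (hi : i + 1 < N) (k l : Fin n)
    (hXi : X ⟨i, by omega⟩ = k) (hXi1 : X ⟨i + 1, hi⟩ = l)
    (hX'i : X' ⟨i, by omega⟩ = l) (hX'i1 : X' ⟨i + 1, hi⟩ = k)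
    (hX'other : ∀ j : Fin N, j ≠ ⟨i, by omega⟩ → j ≠ ⟨i + 1, hi⟩ → X' j = X j) :
    Real.exp (-energy α X) * lam k l = Real.exp (-energy α X') * lam l k := by
  set i0 : Fin N := ⟨i, by omega⟩ with hi0
  set i1 : Fin N := ⟨i + 1, hi⟩ with hi1
  have hne : i0 ≠ i1 := by simp [hi0, hi1, Fin.ext_iff]
  have hlt01 : i0 < i1 := by simp [hi0, hi1, Fin.mk_lt_mk]
  have hnlt : ¬ i1 < i0 := not_lt.mpr hlt01.le
  set σ := Equiv.swap i0 i1 with hσdef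
  have hσ0 : σ i0 = i1 := Equiv.swap_apply_left _ _
  have hσ1 : σ i1 = i0 := Equiv.swap_apply_right _ _
  have hσσ : ∀ x, σ (σ x) = x := fun x => Equiv.swap_apply_self _ _ x
  have hX' : ∀ j, X' j = X (σ j) := by
    intro j
    by_cases h0 : j = i0
    · subst h0; rw [hσ0, hXi1, hX'i]
    by_cases h1 : j = i1
    · subst h1; rw [hσ1, hXi, hX'i1]
    · rw [hX'other j h0 h1, hσdef, Equiv.swap_apply_of_ne_of_ne h0 h1]
  -- value of the swap in ℕ terms
  have hval : ∀ x : Fin N, ((σ x : Fin N) : ℕ) =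
      if (x : ℕ) = i then i + 1 else if (x : ℕ) = i + 1 then i else (x : ℕ) := by
    intro x
    rw [hσdef, Equiv.swap_apply_def]
    by_cases h1 : x = i0
    · simp [h1, hi0, hi1]
    · by_cases h2 : x = i1
      · have : (x : ℕ) ≠ i := fun h => h1 (Fin.ext h)
        simp [h2, hi0, hi1, if_neg, this]
      · have e1 : (x : ℕ) ≠ i := fun h => h1 (Fin.ext h)
        have e2 : (x : ℕ) ≠ i + 1 := fun h => h2 (Fin.ext h)
        simp [if_neg h1, if_neg h2, e1, e2]
  -- key order lemma
  have key : ∀ a b : Fin N, a < b → (a, b) ≠ (i0, i1) → σ a < σ b := by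
    intro a b hab hne2
    have h2' : ¬((a : ℕ) = i ∧ (b : ℕ) = i + 1) := by
      rintro ⟨h1, h2⟩
      exact hne2 (Prod.ext (Fin.ext h1) (Fin.ext h2))
    have ha := hval a
    have hb := hval b
    rw [Fin.lt_def] at hab ⊢
    split_ifs at ha hb <;> omega
  set S : Finset (Fin N × Fin N) :=
    Finset.univ.filter (fun p : Fin N × Fin N => p.1 < p.2) with hS
  set S' : Finset (Fin N × Fin N) :=
    Finset.univ.filter (fun p : Fin N × Fin N => σ p.1 < σ p.2) with hS'
  have hE' : energy α X' = ∑ p ∈ S', α (X p.1) (X p.2) := by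
    rw [energy, ← hS]
    refine Finset.sum_nbij' (fun p => (σ p.1, σ p.2)) (fun p => (σ p.1, σ p.2))
      ?_ ?_ ?_ ?_ ?_
    · intro a ha; simp only [hS, hS', Finset.mem_filter, Finset.mem_univ, true_and] at *
      simpa [hσσ] using ha
    · intro a ha; simp only [hS, hS', Finset.mem_filter, Finset.mem_univ, true_and] at *
      exact ha
    · intro a _; simp [hσσ]
    · intro a _; simp [hσσ]
    · intro a _; simp [hX']
  have h01 : (i0, i1) ∈ S := by
    simp only [hS, Finset.mem_filter, Finset.mem_univ, true_and]
    exact hlt01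
  have h10 : (i1, i0) ∈ S' := by
    simp only [hS', Finset.mem_filter, Finset.mem_univ, true_and]
    show σ i1 < σ i0
    rw [hσ1, hσ0]
    exact hlt01
  have herase : S.erase (i0, i1) = S'.erase (i1, i0) := by
    ext p
    simp only [Finset.mem_erase, hS, hS', Finset.mem_filter, Finset.mem_univ, true_and]
    constructor
    · rintro ⟨hp, hlt⟩
      refine ⟨?_, key _ _ hlt hp⟩
      rintro rfl
      exact hnlt hlt
    · rintro ⟨hp, hlt⟩
      have hp2 : (σ p.1, σ p.2) ≠ (i0, i1) := by
        intro h
        apply hp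
        have h1 : σ p.1 = i0 := congrArg Prod.fst h
        have h2 : σ p.2 = i1 := congrArg Prod.snd h
        have e1 : p.1 = i1 := by rw [← hσσ p.1, h1, hσ0]
        have e2 : p.2 = i0 := by rw [← hσσ p.2, h2, hσ1]
        exact Prod.ext e1 e2
      have := key _ _ hlt hp2
      simp only [hσσ] at this
      refine ⟨?_, this⟩
      rintro rfl
      simp only [hσ0, hσ1] at hlt
      exact hnlt hlt
  have hEX : energy α X = α k l + ∑ p ∈ S.erase (i0, i1), α (X p.1) (X p.2) := by
    rw [energy, ← hS, ← Finset.add_sum_erase S _ h01, hXi, hXi1]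
  have hEX' : energy α X' = α l k + ∑ p ∈ S.erase (i0, i1), α (X p.1) (X p.2) := by
    rw [hE', ← Finset.add_sum_erase S' _ h10, herase, hXi, hXi1]
  have hdiff : energy α X - energy α X' = α k l - α l k := by
    rw [hEX, hEX']; ring
  have hexp : Real.exp (α k l - α l k) = lam k l / lam l k := by
    rw [hrate k l, Real.exp_log (div_pos (hpos k l) (hpos l k))]
  have hlam : lam k l = Real.exp (α k l - α l k) * lam l k := by
    rw [hexp, div_mul_cancel₀ _ (hpos l k).ne']
  rw [hlam, ← mul_assoc, ← Real.exp_add]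
  congr 2
  have := hdiff
  linarith
end

section
/- Let N ≥ 2, n ≥ 1, α : Fin n → Fin n → ℝ, and for X : Fin N → Fin n let H(X) = Σ_{i<j} α(X_i, X_j). Let σ : Fin N → Fin N be the cyclic shift σ(i) = i+1 (mod N) and let Y = X ∘ σ be the cyclically shifted configuration. Then H(Y) = H(X) + Σ_{l} N^l(X) · (α(l, k₁) − α(k₁, l)), where k₁ = X_1 is the letter at the first site and N^l(X) = #{ j : X_j = l } is the number of sites carrying the letter l. -/
open Finset

/-- Under the cyclic shift `σ(i) = i + 1 (mod N)`, the energy changes according to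
`H(X∘σ) = H(X) + ∑_l N^l(X)·(α(l,k₁) − α(k₁,l))` where `k₁` is the letter at the first
site and `N^l(X)` is the number of sites carrying letter `l`. -/
theorem energy_cyclic_shift (N n : ℕ) (hN : 2 ≤ N) (hn : 1 ≤ n)
    (α : Fin n → Fin n → ℝ) (X : Fin N → Fin n)
    (σ : Fin N → Fin N) (hσ : ∀ i : Fin N, (σ i : ℕ) = ((i : ℕ) + 1) % N)
    (k₁ : Fin n) (hk₁ : X ⟨0, by omega⟩ = k₁) :
    energy α (X ∘ σ) = energy α X +
      ∑ l : Fin n,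
        ((Finset.univ.filter (fun j : Fin N => X j = l)).card : ℝ) * (α l k₁ - α k₁ l) := by
  haveI : NeZero N := ⟨by omega⟩
  have h0 : (⟨0, by omega⟩ : Fin N) = 0 := by
    apply Fin.ext; simp
  have hv0 : ((0 : Fin N) : ℕ) = 0 := Fin.val_zero N
  rw [h0] at hk₁
  have hvz : ∀ a : Fin N, a = 0 ↔ (a : ℕ) = 0 := by
    intro a
    constructor
    · intro h; rw [h, hv0]
    · intro h; apply Fin.ext; rw [h, hv0]
  -- the inverse shift
  set ρ : Fin N → Fin N := fun j => ⟨(j.val + (N - 1)) % N, Nat.mod_lt _ (by omega)⟩ with hρ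
  have hρσ : ∀ i, ρ (σ i) = i := by
    intro i
    have hi := i.isLt
    apply Fin.ext
    show ((σ i : ℕ) + (N - 1)) % N = i
    rw [hσ, Nat.mod_add_mod]
    have : (i : ℕ) + 1 + (N - 1) = i + N := by omega
    rw [this, Nat.add_mod_right, Nat.mod_eq_of_lt hi]
  have hσρ : ∀ j, σ (ρ j) = j := by
    intro j
    have hj := j.isLt
    apply Fin.ext
    rw [hσ]
    show ((j.val + (N - 1)) % N + 1) % N = j
    rw [Nat.mod_add_mod]
    have : (j : ℕ) + (N - 1) + 1 = j + N := by omega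
    rw [this, Nat.add_mod_right, Nat.mod_eq_of_lt hj]
  have hσval : ∀ i : Fin N, (i : ℕ) + 1 < N → (σ i : ℕ) = (i : ℕ) + 1 := by
    intro i hi; rw [hσ, Nat.mod_eq_of_lt hi]
  have hρval : ∀ a : Fin N, a ≠ 0 → ((ρ a : Fin N) : ℕ) = (a : ℕ) - 1 := by
    intro a ha
    have ha' : (a : ℕ) ≠ 0 := fun h => ha ((hvz a).2 h)
    have h1 := a.isLt
    show ((a : ℕ) + (N - 1)) % N = (a : ℕ) - 1
    have : (a : ℕ) + (N - 1) = ((a : ℕ) - 1) + N := by omega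
    rw [this, Nat.add_mod_right, Nat.mod_eq_of_lt (by omega)]
  -- target set for the shifted sum
  set A : Finset (Fin N × Fin N) :=
    Finset.univ.filter (fun p : Fin N × Fin N => p.1 < p.2) with hA
  set T : Finset (Fin N × Fin N) :=
    Finset.univ.filter (fun p : Fin N × Fin N => p.1 ≠ 0 ∧ (p.2 = 0 ∨ p.1 < p.2)) with hT
  have memA : ∀ p : Fin N × Fin N, p ∈ A ↔ (p.1 : ℕ) < (p.2 : ℕ) := by
    intro p; rw [hA, Finset.mem_filter]
    exact ⟨fun h => h.2, fun h => ⟨Finset.mem_univ _, h⟩⟩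
  have memT : ∀ p : Fin N × Fin N,
      p ∈ T ↔ (p.1 ≠ 0 ∧ (p.2 = 0 ∨ (p.1 : ℕ) < (p.2 : ℕ))) := by
    intro p; rw [hT, Finset.mem_filter]
    exact ⟨fun h => h.2, fun h => ⟨Finset.mem_univ _, h⟩⟩
  have step1 : energy α (X ∘ σ) = ∑ q ∈ T, α (X q.1) (X q.2) := by
    rw [energy, ← hA]
    refine Finset.sum_nbij' (fun p => (σ p.1, σ p.2)) (fun q => (ρ q.1, ρ q.2)) ?_ ?_ ?_ ?_ ?_
    · intro p hp
      rw [memA] at hp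
      have h2 := p.2.isLt
      rw [memT]
      refine ⟨?_, ?_⟩
      · intro hcon
        have hcon' : σ p.1 = 0 := hcon
        have h3 : (σ p.1 : ℕ) = 0 := by rw [hcon', hv0]
        rw [hσval p.1 (by omega)] at h3
        omega
      · rcases Nat.lt_or_ge ((p.2 : ℕ) + 1) N with h | h
        · right
          rw [hσval p.1 (by omega), hσval p.2 h]; omega
        · left
          rw [hvz, hσ]
          have : (p.2 : ℕ) + 1 = N := by omega
          rw [this, Nat.mod_self]
    · intro q hq
      rw [memT] at hq
      obtain ⟨hq1, hq2⟩ := hq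
      have hq1' : (q.1 : ℕ) ≠ 0 := fun h => hq1 ((hvz _).2 h)
      have h1 := q.1.isLt
      have h2 := q.2.isLt
      rw [memA, hρval q.1 hq1]
      rcases hq2 with h | h
      · have hq2v : (q.2 : ℕ) = 0 := (hvz _).1 h
        have : ((ρ q.2 : Fin N) : ℕ) = N - 1 := by
          show ((q.2 : ℕ) + (N - 1)) % N = N - 1
          rw [hq2v, Nat.zero_add, Nat.mod_eq_of_lt (by omega)]
        rw [this]; omega
      · have hq2' : q.2 ≠ 0 := by
          intro hc; rw [(hvz _).1 hc] at h; omega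
        rw [hρval q.2 hq2']; omega
    · intro p _; simp only [hρσ]
    · intro q _; simp only [hσρ]
    · intro p _; rfl
  -- split A into pairs with first coordinate 0 and the rest
  have hs0 : ∀ b : Fin N, b ∈ Finset.univ.filter (fun b : Fin N => b ≠ 0) ↔ b ≠ 0 := by
    intro b; rw [Finset.mem_filter]
    exact ⟨fun h => h.2, fun h => ⟨Finset.mem_univ _, h⟩⟩
  have hsplitA : energy α X
      = (∑ b ∈ Finset.univ.filter (fun b : Fin N => b ≠ 0), α k₁ (X b))
        + ∑ p ∈ A.filter (fun p => ¬ p.1 = 0), α (X p.1) (X p.2) := by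
    rw [energy, ← hA, ← Finset.sum_filter_add_sum_filter_not A (fun p => p.1 = 0)]
    congr 1
    refine Finset.sum_nbij' (fun p => p.2) (fun b => ((0 : Fin N), b)) ?_ ?_ ?_ ?_ ?_
    · intro p hp
      rw [Finset.mem_filter, memA] at hp
      rw [hs0]
      show p.2 ≠ 0
      intro hc
      have h2 : (p.2 : ℕ) = 0 := (hvz _).1 hc
      have h1 : (p.1 : ℕ) = 0 := (hvz _).1 hp.2
      have := hp.1
      omega
    · intro b hb
      rw [hs0] at hb
      have hb' : (b : ℕ) ≠ 0 := fun h => hb ((hvz _).2 h)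
      rw [Finset.mem_filter, memA]
      refine ⟨?_, rfl⟩
      show ((0 : Fin N) : ℕ) < (b : ℕ)
      rw [hv0]
      omega
    · intro p hp
      rw [Finset.mem_filter] at hp
      exact Prod.ext hp.2.symm rfl
    · intro b _; rfl
    · intro p hp
      rw [Finset.mem_filter] at hp
      rw [hp.2, hk₁]
  have hsplitT : (∑ q ∈ T, α (X q.1) (X q.2))
      = (∑ a ∈ Finset.univ.filter (fun a : Fin N => a ≠ 0), α (X a) k₁)
        + ∑ p ∈ A.filter (fun p => ¬ p.1 = 0), α (X p.1) (X p.2) := by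
    rw [← Finset.sum_filter_add_sum_filter_not T (fun q => q.2 = 0)]
    congr 1
    · refine Finset.sum_nbij' (fun q => q.1) (fun a => (a, (0 : Fin N))) ?_ ?_ ?_ ?_ ?_
      · intro q hq
        rw [Finset.mem_filter, memT] at hq
        rw [hs0]
        exact hq.1.1
      · intro a ha
        rw [hs0] at ha
        rw [Finset.mem_filter, memT]
        exact ⟨⟨ha, Or.inl rfl⟩, rfl⟩
      · intro q hq
        rw [Finset.mem_filter] at hq
        exact Prod.ext rfl hq.2.symm
      · intro a _; rfl
      · intro q hq
        rw [Finset.mem_filter] at hq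
        rw [hq.2, hk₁]
    · apply Finset.sum_congr _ (fun _ _ => rfl)
      ext q
      rw [Finset.mem_filter, memT, Finset.mem_filter, memA]
      constructor
      · rintro ⟨⟨h1, h2 | h2⟩, h3⟩
        · exact absurd h2 h3
        · exact ⟨h2, h1⟩
      · rintro ⟨h1, h2⟩
        refine ⟨⟨h2, Or.inr h1⟩, ?_⟩
        intro hcon
        have := (hvz q.2).1 hcon
        omega
  -- the correction term
  have hcorr : (∑ l : Fin n,
        ((Finset.univ.filter (fun j : Fin N => X j = l)).card : ℝ) * (α l k₁ - α k₁ l))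
      = ∑ j ∈ Finset.univ.filter (fun j : Fin N => j ≠ 0),
          (α (X j) k₁ - α k₁ (X j)) := by
    have h1 : ∀ l : Fin n,
        ((Finset.univ.filter (fun j : Fin N => X j = l)).card : ℝ) * (α l k₁ - α k₁ l)
        = ∑ j ∈ Finset.univ.filter (fun j : Fin N => X j = l), (α l k₁ - α k₁ l) := by
      intro l; rw [Finset.sum_const, nsmul_eq_mul]
    rw [Finset.sum_congr rfl (fun l _ => h1 l),
      Finset.sum_fiberwise' Finset.univ X (fun l => α l k₁ - α k₁ l)]
    rw [← Finset.sum_filter_add_sum_filter_not Finset.univ (fun j : Fin N => j ≠ 0)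
      (fun j => α (X j) k₁ - α k₁ (X j))]
    have hz : Finset.univ.filter (fun j : Fin N => ¬ j ≠ 0) = {0} := by
      ext j
      rw [Finset.mem_filter, Finset.mem_singleton]
      simp [not_not]
    rw [hz, Finset.sum_singleton, hk₁, sub_self, add_zero]
  rw [step1, hsplitT, hsplitA, hcorr, Finset.sum_sub_distrib]
  ring
end

section
/- Let N ≥ 2, n ≥ 1, α : Fin n → Fin n → ℝ, and for X : Fin N → Fin n let H(X) = Σ_{i<j} α(X_i, X_j). Fix nonnegative integers (N^l)_{l ∈ Fin n} with Σ_l N^l = N and suppose that for every letter k one has Σ_l (α(k,l) − α(l,k)) · N^l = 0. Then for every configuration X whose letter counts are exactly (N^l)_l (i.e. #{ j : X_j = l } = N^l for each l), the energy is invariant under the cyclic shift: H(X ∘ σ) = H(X), where σ(i) = i+1 (mod N). -/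
open Finset

/-- If the letter counts `(N^l)_l` satisfy `∑_l (α(k,l) − α(l,k))·N^l = 0` for every
letter `k`, then the energy of any configuration with these counts is invariant under
the cyclic shift `σ(i) = i + 1 (mod N)`. -/
theorem energy_cyclic_shift_invariant (N n : ℕ) (hN : 2 ≤ N) (hn : 1 ≤ n)
    (α : Fin n → Fin n → ℝ) (Nl : Fin n → ℕ) (hsum : ∑ l : Fin n, Nl l = N)
    (hbal : ∀ k : Fin n, ∑ l : Fin n, (α k l - α l k) * (Nl l : ℝ) = 0)
    (X : Fin N → Fin n)
    (hcount : ∀ l : Fin n, (Finset.univ.filter (fun j : Fin N => X j = l)).card = Nl l)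
    (σ : Fin N → Fin N) (hσ : ∀ i : Fin N, (σ i : ℕ) = ((i : ℕ) + 1) % N) :
    energy α (X ∘ σ) = energy α X := by
  obtain ⟨m, rfl⟩ : ∃ m, N = m + 2 := ⟨N - 2, by omega⟩
  -- σ is addition of 1
  have hσeq : σ = fun i => i + 1 := by
    funext i
    apply Fin.ext
    rw [hσ, Fin.add_def]
    simp
  subst hσeq
  set L : Fin (m + 2) := Fin.last (m + 1) with hL
  have hL1 : L + 1 = 0 := by
    apply Fin.ext
    rw [Fin.add_def]
    simp [hL]
  have hadd : ∀ a : Fin (m + 2), a.val < m + 1 → ((a + 1 : Fin (m + 2)) : ℕ) = a.val + 1 := by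
    intro a ha
    rw [Fin.add_def]
    simp only [Fin.val_one]
    exact Nat.mod_eq_of_lt (by omega)
  have hsub : ∀ a : Fin (m + 2), a ≠ 0 → ((a - 1 : Fin (m + 2)) : ℕ) = a.val - 1 := by
    intro a ha
    rw [Fin.coe_sub_one, if_neg ha]
  have hne0 : ∀ a : Fin (m + 2), a ≠ 0 → 1 ≤ a.val := by
    intro a ha
    rcases Nat.pos_of_ne_zero (fun h => ha (Fin.ext h)) with h
    omega
  set P := Finset.univ.filter (fun p : Fin (m + 2) × Fin (m + 2) => p.1 < p.2) with hP
  -- Decompose the shifted energy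
  have hsplit1 : energy α (X ∘ fun i => i + 1)
      = (∑ p ∈ P.filter (fun p => p.2 ≠ L), α (X (p.1 + 1)) (X (p.2 + 1)))
        + ∑ p ∈ P.filter (fun p => p.2 = L), α (X (p.1 + 1)) (X (p.2 + 1)) := by
    rw [energy, ← hP, ← Finset.sum_filter_add_sum_filter_not P (fun p => p.2 ≠ L)]
    simp only [Function.comp, not_not]
  have hsplit2 : energy α X
      = (∑ p ∈ P.filter (fun p => p.1 ≠ 0), α (X p.1) (X p.2))
        + ∑ p ∈ P.filter (fun p => p.1 = 0), α (X p.1) (X p.2) := by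
    rw [energy, ← hP, ← Finset.sum_filter_add_sum_filter_not P (fun p => p.1 ≠ 0)]
    simp only [not_not]
  -- main bijection: (i,j) ↦ (i+1, j+1)
  have hA : (∑ p ∈ P.filter (fun p => p.2 ≠ L), α (X (p.1 + 1)) (X (p.2 + 1)))
      = ∑ p ∈ P.filter (fun p => p.1 ≠ 0), α (X p.1) (X p.2) := by
    apply Finset.sum_nbij' (fun p => (p.1 + 1, p.2 + 1)) (fun p => (p.1 - 1, p.2 - 1))
    · intro p hp
      simp only [hP, Finset.mem_filter, Finset.mem_univ, true_and] at hp ⊢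
      obtain ⟨h1, h2⟩ := hp
      have hp2 : p.2.val < m + 1 := by
        have := p.2.isLt
        have : p.2.val ≠ m + 1 := fun h => h2 (Fin.ext (by simp [hL, h]))
        omega
      have hp1 : p.1.val < m + 1 := by
        have := Fin.lt_def.mp h1; omega
      constructor
      · rw [Fin.lt_def, hadd _ hp1, hadd _ hp2]
        have := Fin.lt_def.mp h1; omega
      · intro h
        have := congrArg Fin.val h
        rw [hadd _ hp1] at this
        simp at this
    · intro p hp
      simp only [hP, Finset.mem_filter, Finset.mem_univ, true_and] at hp ⊢
      obtain ⟨h1, h2⟩ := hp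
      have hp1 := hne0 _ h2
      have hp2 : 1 ≤ p.2.val := by
        have := Fin.lt_def.mp h1; omega
      have h2' : p.2 ≠ 0 := by
        intro h; rw [h] at hp2; simp at hp2
      constructor
      · rw [Fin.lt_def, hsub _ h2, hsub _ h2']
        have := Fin.lt_def.mp h1; omega
      · intro h
        have := congrArg Fin.val h
        rw [hsub _ h2'] at this
        simp only [hL, Fin.val_last] at this
        have := p.2.isLt
        omega
    · intro p _
      simp [add_sub_cancel_right]
    · intro p _
      simp [sub_add_cancel]
    · intro p _; rfl
  -- boundary sum for the shifted energy
  have hB : (∑ p ∈ P.filter (fun p => p.2 = L), α (X (p.1 + 1)) (X (p.2 + 1)))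
      = ∑ a ∈ Finset.univ.filter (fun a : Fin (m + 2) => a ≠ 0), α (X a) (X 0) := by
    apply Finset.sum_nbij' (fun p => p.1 + 1) (fun a => (a - 1, L))
    · intro p hp
      simp only [hP, Finset.mem_filter, Finset.mem_univ, true_and] at hp ⊢
      obtain ⟨h1, h2⟩ := hp
      have hp1 : p.1.val < m + 1 := by
        have := Fin.lt_def.mp h1
        rw [h2] at this
        simpa [hL] using this
      intro h
      have := congrArg Fin.val h
      rw [hadd _ hp1] at this
      simp at this
    · intro a ha
      simp only [Finset.mem_filter, Finset.mem_univ, true_and] at ha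
      simp only [hP, Finset.mem_filter, Finset.mem_univ, true_and]
      have h1 := hne0 _ ha
      refine ⟨?_, trivial⟩
      rw [Fin.lt_def, hsub _ ha]
      simp only [hL, Fin.val_last]
      have := a.isLt
      omega
    · intro p hp
      simp only [hP, Finset.mem_filter, Finset.mem_univ, true_and] at hp
      obtain ⟨h1, h2⟩ := hp
      rw [add_sub_cancel_right, ← h2]
    · intro a _
      simp [sub_add_cancel]
    · intro p hp
      simp only [hP, Finset.mem_filter, Finset.mem_univ, true_and] at hp
      rw [hp.2, hL1]
  -- boundary sum for the original energy
  have hC : (∑ p ∈ P.filter (fun p => p.1 = 0), α (X p.1) (X p.2))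
      = ∑ a ∈ Finset.univ.filter (fun a : Fin (m + 2) => a ≠ 0), α (X 0) (X a) := by
    apply Finset.sum_nbij' (fun p => p.2) (fun a => (0, a))
    · intro p hp
      simp only [hP, Finset.mem_filter, Finset.mem_univ, true_and] at hp ⊢
      obtain ⟨h1, h2⟩ := hp
      intro h
      rw [h, ← h2] at h1
      exact lt_irrefl _ h1
    · intro a ha
      simp only [Finset.mem_filter, Finset.mem_univ, true_and] at ha
      simp only [hP, Finset.mem_filter, Finset.mem_univ, true_and]
      exact ⟨Fin.pos_iff_ne_zero.mpr ha, trivial⟩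
    · intro p hp
      simp only [hP, Finset.mem_filter, Finset.mem_univ, true_and] at hp
      rw [← hp.2]
    · intro a _; rfl
    · intro p hp
      simp only [hP, Finset.mem_filter, Finset.mem_univ, true_and] at hp
      rw [hp.2]
  -- the difference
  have hdiff : energy α (X ∘ fun i => i + 1) - energy α X
      = ∑ a : Fin (m + 2), (α (X a) (X 0) - α (X 0) (X a)) := by
    have key : ∑ a ∈ Finset.univ.filter (fun a : Fin (m + 2) => a ≠ 0),
        (α (X a) (X 0) - α (X 0) (X a))
        = ∑ a : Fin (m + 2), (α (X a) (X 0) - α (X 0) (X a)) := by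
      apply Finset.sum_filter_of_ne
      intro a _ h ha
      apply h
      rw [ha]
      ring
    rw [hsplit1, hsplit2, hA, hB, hC, ← key, Finset.sum_sub_distrib]
    ring
  -- regroup by letters
  have hfib : ∑ a : Fin (m + 2), (α (X a) (X 0) - α (X 0) (X a))
      = ∑ l : Fin n, (α l (X 0) - α (X 0) l) * (Nl l : ℝ) := by
    rw [← Finset.sum_fiberwise (Finset.univ) X (fun a => α (X a) (X 0) - α (X 0) (X a))]
    apply Finset.sum_congr rfl
    intro l _
    rw [show ∑ a ∈ Finset.univ.filter (fun a => X a = l), (α (X a) (X 0) - α (X 0) (X a))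
        = ∑ a ∈ Finset.univ.filter (fun a => X a = l), (α l (X 0) - α (X 0) l) from
      Finset.sum_congr rfl (fun a ha => by
        rw [(Finset.mem_filter.mp ha).2])]
    rw [Finset.sum_const, hcount l, nsmul_eq_mul, mul_comm]
  have hbal' : ∑ l : Fin n, (α l (X 0) - α (X 0) l) * (Nl l : ℝ) = 0 := by
    have := hbal (X 0)
    have h2 : ∑ l : Fin n, (α l (X 0) - α (X 0) l) * (Nl l : ℝ)
        = -∑ l : Fin n, (α (X 0) l - α l (X 0)) * (Nl l : ℝ) := by
      rw [← Finset.sum_neg_distrib]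
      apply Finset.sum_congr rfl
      intro l _
      ring
    rw [h2, this, neg_zero]
  have : energy α (X ∘ fun i => i + 1) - energy α X = 0 := by
    rw [hdiff, hfib, hbal']
  linarith
end

section
/- Let n = 2p be an even integer, let indices of letters be taken modulo n, let N ≥ 2, and let α : Fin n → Fin n → ℝ satisfy the compatibility condition: there exists a constant a ∈ ℝ such that α(k,l) + α(k+p, l) = a and α(l,k) + α(l, k+p) = a for all letters k, l. For X : Fin N → Fin n let H(X) = Σ_{i<j} α(X_i, X_j). Suppose X has a fold at adjacent sites i, i+1, i.e. X_i = k and X_{i+1} = k+p, and let X' be obtained from X by rotating the fold: X'_i = k+1, X'_{i+1} = k+p+1, and X'_j = X_j elsewhere. Then H(X') − H(X) = α(k+1, k+p+1) − α(k, k+p); in particular the energy change does not depend on the values of X at the other sites. -/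
open Finset
open Fin.NatCast
set_option maxHeartbeats 1000000

/-- In the even alphabet model (`n = 2p`, letters mod `n`) with couplings satisfying the
compatibility condition `α(k,l) + α(k+p,l) = a` and `α(l,k) + α(l,k+p) = a`, rotating a
fold `(k, k+p) ↦ (k+1, k+p+1)` at adjacent sites changes the energy by
`α(k+1, k+p+1) − α(k, k+p)`, independently of the values at the other sites. -/
theorem energy_fold_rotation (p n N : ℕ) (hp : 1 ≤ p) (hn : n = 2 * p) [NeZero n]
    (hN : 2 ≤ N) (α : Fin n → Fin n → ℝ) (a : ℝ)
    (hcomp : ∀ k l : Fin n,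
      α k l + α (k + (p : Fin n)) l = a ∧ α l k + α l (k + (p : Fin n)) = a)
    (X X' : Fin N → Fin n) (i : ℕ) (hi : i + 1 < N) (k : Fin n)
    (hXi : X ⟨i, by omega⟩ = k) (hXi1 : X ⟨i + 1, hi⟩ = k + (p : Fin n))
    (hX'i : X' ⟨i, by omega⟩ = k + 1) (hX'i1 : X' ⟨i + 1, hi⟩ = k + (p : Fin n) + 1)
    (hX'other : ∀ j : Fin N, j ≠ ⟨i, by omega⟩ → j ≠ ⟨i + 1, hi⟩ → X' j = X j) :
    energy α X' - energy α X = α (k + 1) (k + (p : Fin n) + 1) - α k (k + (p : Fin n)) := by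
  set i0 : Fin N := ⟨i, by omega⟩ with hi0
  set i1 : Fin N := ⟨i + 1, hi⟩ with hi1
  have hne : i0 ≠ i1 := by
    simp [hi0, hi1, Fin.ext_iff]
  have hlt01 : i0 < i1 := by
    simp [hi0, hi1, Fin.lt_def]
  have hpk : (k + (p : Fin n) + 1) = (k + 1) + (p : Fin n) := by exact add_right_comm _ _ _
  set h : Fin N → Fin N → ℝ :=
    fun j1 j2 => if j1 < j2 then α (X' j1) (X' j2) - α (X j1) (X j2) else 0 with hh
  have key : energy α X' - energy α X = ∑ j1, ∑ j2, h j1 j2 := by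
    unfold energy
    rw [← Finset.sum_sub_distrib, Finset.sum_filter, Fintype.sum_prod_type]
  have cancel1 : ∀ l : Fin n,
      α (k + 1) l - α k l + (α (k + (p : Fin n) + 1) l - α (k + (p : Fin n)) l) = 0 := by
    intro l
    have h1 := (hcomp k l).1
    have h2 := (hcomp (k + 1) l).1
    rw [hpk]
    linarith
  have cancel2 : ∀ l : Fin n,
      α l (k + 1) - α l k + (α l (k + (p : Fin n) + 1) - α l (k + (p : Fin n))) = 0 := by
    intro l
    have h1 := (hcomp k l).2
    have h2 := (hcomp (k + 1) l).2
    rw [hpk]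
    linarith
  have hFother : ∀ j1 : Fin N, j1 ≠ i0 → j1 ≠ i1 → ∑ j2, h j1 j2 = 0 := by
    intro j1 h1 h2
    have hsupp : ∀ j2 ∈ (Finset.univ : Finset (Fin N)),
        j2 ∉ ({i0, i1} : Finset (Fin N)) → h j1 j2 = 0 := by
      intro j2 _ hj2
      simp only [Finset.mem_insert, Finset.mem_singleton, not_or] at hj2
      simp only [hh]
      rw [hX'other j1 h1 h2, hX'other j2 hj2.1 hj2.2]
      split <;> simp
    rw [← Finset.sum_subset (Finset.subset_univ {i0, i1}) hsupp, Finset.sum_pair hne]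
    simp only [hh]
    rw [hX'other j1 h1 h2, hX'i, hX'i1, hXi, hXi1]
    by_cases hlt : j1 < i0
    · have hlt' : j1 < i1 := lt_trans hlt hlt01
      rw [if_pos hlt, if_pos hlt']
      exact cancel2 (X j1)
    · have hv1 : (j1 : ℕ) ≠ i := fun hc => h1 (Fin.ext hc)
      have hv2 : (j1 : ℕ) ≠ i + 1 := fun hc => h2 (Fin.ext hc)
      have hlt'' : ¬ j1 < i1 := by
        simp only [hi0, hi1, Fin.lt_def] at hlt ⊢
        omega
      rw [if_neg hlt, if_neg hlt'']
      ring
  have hpair : ∀ j2 : Fin N, h i0 j2 + h i1 j2 = if j2 = i1 then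
      α (k + 1) (k + (p : Fin n) + 1) - α k (k + (p : Fin n)) else 0 := by
    intro j2
    by_cases he1 : j2 = i1
    · subst he1
      rw [if_pos rfl]
      simp only [hh]
      rw [if_pos hlt01, if_neg (lt_irrefl _), hX'i, hX'i1, hXi, hXi1]
      ring
    · rw [if_neg he1]
      by_cases he0 : j2 = i0
      · subst he0
        simp only [hh]
        rw [if_neg (lt_irrefl _), if_neg (not_lt_of_gt hlt01)]
        ring
      · have hX'j2 := hX'other j2 he0 he1
        by_cases hlt : i1 < j2
        · have hlt0 : i0 < j2 := lt_trans hlt01 hlt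
          simp only [hh]
          rw [if_pos hlt0, if_pos hlt, hX'j2, hX'i, hX'i1, hXi, hXi1]
          exact cancel1 (X j2)
        · have hv1 : (j2 : ℕ) ≠ i := fun hc => he0 (Fin.ext hc)
          have hv2 : (j2 : ℕ) ≠ i + 1 := fun hc => he1 (Fin.ext hc)
          have h0 : ¬ i0 < j2 := by
            simp only [hi0, hi1, Fin.lt_def] at hlt ⊢
            omega
          simp only [hh]
          rw [if_neg h0, if_neg hlt]
          ring
  rw [key]
  have hsupp1 : ∀ j1 ∈ (Finset.univ : Finset (Fin N)),
      j1 ∉ ({i0, i1} : Finset (Fin N)) → ∑ j2, h j1 j2 = 0 := by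
    intro j1 _ hj1
    simp only [Finset.mem_insert, Finset.mem_singleton, not_or] at hj1
    exact hFother j1 hj1.1 hj1.2
  rw [← Finset.sum_subset (Finset.subset_univ {i0, i1}) hsupp1, Finset.sum_pair hne,
    ← Finset.sum_add_distrib]
  rw [Finset.sum_congr rfl (fun j2 _ => hpair j2)]
  simp
end

section
/- Let α, β, γ ∈ ℝ and let ρ_a, ρ_b, ρ_c : ℝ → ℝ be differentiable, strictly positive functions satisfying the Lotka–Volterra system ρ_a' = ρ_a(βρ_c − γρ_b), ρ_b' = ρ_b(γρ_a − αρ_c), ρ_c' = ρ_c(αρ_b − βρ_a) on ℝ. Then the quantity ρ_a^α · ρ_b^β · ρ_c^γ (real powers of positive reals) is a constant of motion: for all x, y ∈ ℝ, ρ_a(x)^α ρ_b(x)^β ρ_c(x)^γ = ρ_a(y)^α ρ_b(y)^β ρ_c(y)^γ. -/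
/-- For strictly positive solutions of the Lotka–Volterra system arising from the ABC
model, the quantity `ρ_a^α · ρ_b^β · ρ_c^γ` (real powers) is a constant of motion. -/
theorem lotka_volterra_kappa_constant (α β γ : ℝ) (ρa ρb ρc : ℝ → ℝ)
    (ha : Differentiable ℝ ρa) (hb : Differentiable ℝ ρb) (hc : Differentiable ℝ ρc)
    (hapos : ∀ x, 0 < ρa x) (hbpos : ∀ x, 0 < ρb x) (hcpos : ∀ x, 0 < ρc x)
    (hLVa : ∀ x, deriv ρa x = ρa x * (β * ρc x - γ * ρb x))
    (hLVb : ∀ x, deriv ρb x = ρb x * (γ * ρa x - α * ρc x))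
    (hLVc : ∀ x, deriv ρc x = ρc x * (α * ρb x - β * ρa x)) :
    ∀ x y : ℝ, ρa x ^ α * ρb x ^ β * ρc x ^ γ = ρa y ^ α * ρb y ^ β * ρc y ^ γ := by
  set L : ℝ → ℝ := fun x => α * Real.log (ρa x) + β * Real.log (ρb x) + γ * Real.log (ρc x)
    with hL
  have hderiv : ∀ x, HasDerivAt L 0 x := by
    intro x
    have hA : HasDerivAt (fun x => Real.log (ρa x)) (deriv ρa x / ρa x) x :=
      ((ha x).hasDerivAt.log (hapos x).ne')
    have hB : HasDerivAt (fun x => Real.log (ρb x)) (deriv ρb x / ρb x) x :=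
      ((hb x).hasDerivAt.log (hbpos x).ne')
    have hC : HasDerivAt (fun x => Real.log (ρc x)) (deriv ρc x / ρc x) x :=
      ((hc x).hasDerivAt.log (hcpos x).ne')
    have h := ((hA.const_mul α).add (hB.const_mul β)).add (hC.const_mul γ)
    convert h using 1
    · rfl
    · rfl
    · rfl
    rw [hLVa x, hLVb x, hLVc x, mul_div_cancel_left₀ _ (hapos x).ne',
      mul_div_cancel_left₀ _ (hbpos x).ne', mul_div_cancel_left₀ _ (hcpos x).ne']
    ring
  have hconst : ∀ x y : ℝ, L x = L y := by
    intro x y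
    have : ∀ z, deriv L z = 0 := fun z => (hderiv z).deriv
    have h := is_const_of_deriv_eq_zero (fun z => (hderiv z).differentiableAt) this x y
    exact h
  intro x y
  have key : ∀ z, ρa z ^ α * ρb z ^ β * ρc z ^ γ = Real.exp (L z) := by
    intro z
    rw [Real.rpow_def_of_pos (hapos z), Real.rpow_def_of_pos (hbpos z),
      Real.rpow_def_of_pos (hcpos z), ← Real.exp_add, ← Real.exp_add, hL]
    ring_nf
  rw [key x, key y, hconst x y]
end

section
/- Let ρ_a, ρ_b, ρ_c : ℝ → ℝ be differentiable functions satisfying ρ_a' = ρ_a(ρ_c − ρ_b), ρ_b' = ρ_b(ρ_a − ρ_c), ρ_c' = ρ_c(ρ_b − ρ_a) together with the constraint ρ_a(x) + ρ_b(x) + ρ_c(x) = 1 for all x. Then u = ρ_a + ρ_b satisfies, for every x, the identity (u'(x))² = (1 − u(x)) · ( u(x)² (1 − u(x)) − 4 ρ_a(x) ρ_b(x) ρ_c(x) ); moreover the quantity κ = ρ_a ρ_b ρ_c appearing on the right-hand side is constant in x. -/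
/-- In the symmetric case `α = β = γ = 1` of the ABC Lotka–Volterra system on the
simplex `ρ_a + ρ_b + ρ_c = 1`, the function `u = ρ_a + ρ_b` satisfies
`(u')² = (1 − u)(u²(1 − u) − 4 ρ_a ρ_b ρ_c)`, and `κ = ρ_a ρ_b ρ_c` is constant. -/
theorem lotka_volterra_symmetric_elliptic (ρa ρb ρc : ℝ → ℝ)
    (ha : Differentiable ℝ ρa) (hb : Differentiable ℝ ρb) (hc : Differentiable ℝ ρc)
    (hLVa : ∀ x, deriv ρa x = ρa x * (ρc x - ρb x))
    (hLVb : ∀ x, deriv ρb x = ρb x * (ρa x - ρc x))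
    (hLVc : ∀ x, deriv ρc x = ρc x * (ρb x - ρa x))
    (hsum : ∀ x, ρa x + ρb x + ρc x = 1) :
    (∀ x, (deriv (fun y => ρa y + ρb y) x) ^ 2 =
        (1 - (ρa x + ρb x)) *
          ((ρa x + ρb x) ^ 2 * (1 - (ρa x + ρb x)) - 4 * (ρa x * ρb x * ρc x))) ∧
    (∀ x y : ℝ, ρa x * ρb x * ρc x = ρa y * ρb y * ρc y) := by
  constructor
  · intro x
    have hd : deriv (fun y => ρa y + ρb y) x = deriv ρa x + deriv ρb x :=
      deriv_add (ha x) (hb x)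
    have hcx : ρc x = 1 - (ρa x + ρb x) := by linarith [hsum x]
    rw [hd, hLVa, hLVb, hcx]
    ring
  · intro x y
    have hderiv : ∀ z, deriv (fun t => ρa t * ρb t * ρc t) z = 0 := by
      intro z
      rw [deriv_fun_mul (c := fun t => ρa t * ρb t) ((ha z).mul (hb z)) (hc z), deriv_fun_mul (ha z) (hb z),
        hLVa, hLVb, hLVc]
      ring
    have := is_const_of_deriv_eq_zero (f := fun t => ρa t * ρb t * ρc t)
      ((ha.mul hb).mul hc) hderiv x y
    simpa using this
end

section
/- Let α, β, γ > 0 and set s = α + β + γ. Then the quadratic form Q(θ) = β(α+γ) cos²θ + 2αβ sinθ cosθ + α(β+γ) sin²θ is strictly positive for all θ, and ∫_0^{2π} s / Q(θ) dθ = 2π √( s / (αβγ) ). In other words, the period T(κ̃) of the Lotka–Volterra orbit degenerated to the fixed point equals 2π √( (α+β+γ) / (αβγ) ). -/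
open Real

lemma denom_pos (k : ℝ) (hk : 0 < k) (θ : ℝ) : 0 < Real.cos θ ^ 2 + k * Real.sin θ ^ 2 := by
  nlinarith [Real.sin_sq_add_cos_sq θ, Real.sin_sq_le_one θ, sq_nonneg (Real.sin θ),
    mul_nonneg hk.le (sq_nonneg (Real.sin θ)),
    mul_nonneg hk.le (sub_nonneg.2 (Real.sin_sq_le_one θ))]

lemma hasDerivAt_aux (k : ℝ) (hk : 0 < k) (θ : ℝ) :
    HasDerivAt (fun t => (t + Real.arctan ((k-1) * Real.sin t * Real.cos t /
      (Real.cos t ^ 2 + k * Real.sin t ^ 2))) / k)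
      ((Real.cos θ ^ 2 + k ^ 2 * Real.sin θ ^ 2)⁻¹) θ := by
  have hd := denom_pos k hk θ
  set c := Real.cos θ with hc
  set s := Real.sin θ with hsn
  have hN : HasDerivAt (fun t => (k-1) * Real.sin t * Real.cos t)
      ((k-1) * (c * c - s * s)) θ := by
    have := ((Real.hasDerivAt_sin θ).const_mul (k-1)).mul (Real.hasDerivAt_cos θ)
    exact this.congr_deriv (by ring)
  have hD : HasDerivAt (fun t => Real.cos t ^ 2 + k * Real.sin t ^ 2)
      (2 * c * (-s) + k * (2 * s * c)) θ := by
    have h1 := (Real.hasDerivAt_cos θ).pow 2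
    have h2 := ((Real.hasDerivAt_sin θ).pow 2).const_mul k
    exact (h1.add h2).congr_deriv (by ring)
  have hu := hN.div hD (ne_of_gt hd)
  have hF := ((hasDerivAt_id θ).add hu.arctan).div_const k
  refine hF.congr_deriv ?_
  symm
  simp only [Pi.div_apply, ← hc, ← hsn]
  have hsc : s ^ 2 + c ^ 2 = 1 := Real.sin_sq_add_cos_sq θ
  have hB : (0:ℝ) < c ^ 2 + k ^ 2 * s ^ 2 := denom_pos (k^2) (by positivity) θ
  have h1 : (c^2 + k*s^2)^2 + ((k-1)*s*c)^2 = c^2 + k^2*s^2 := by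
    linear_combination (c^2 + k^2*s^2) * hsc
  have h2 : (c^2 + k*s^2)^2 + ((k-1)*s*c)^2
      + ((k-1)*(c*c-s*s)*(c^2+k*s^2) - (k-1)*s*c*(2*c*(-s)+k*(2*s*c))) = k := by
    linear_combination (k*(s^2+c^2+1)) * hsc
  rw [eq_div_iff hk.ne', eq_comm]
  have hup : (0:ℝ) < 1 + ((k-1)*s*c/(c^2+k*s^2))^2 := by positivity
  field_simp
  linear_combination (c^2+k^2*s^2) * h2 - k * h1

lemma integral_k (k : ℝ) (hk : 0 < k) :
    ∫ θ in (0:ℝ)..(2*π), (Real.cos θ ^ 2 + k^2 * Real.sin θ ^ 2)⁻¹ = 2*π/k := by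
  have hcont : Continuous fun θ : ℝ => (Real.cos θ ^ 2 + k^2 * Real.sin θ ^ 2)⁻¹ := by
    apply Continuous.inv₀ (by continuity)
    exact fun θ => (denom_pos (k^2) (by positivity) θ).ne'
  rw [intervalIntegral.integral_eq_sub_of_hasDerivAt
    (fun θ _ => hasDerivAt_aux k hk θ) (hcont.intervalIntegrable 0 (2*π))]
  simp [Real.sin_two_pi, Real.cos_two_pi]

lemma integral_two (l1 l2 : ℝ) (h1 : 0 < l1) (h2 : 0 < l2) :
    ∫ θ in (0:ℝ)..(2*π), (l1 * Real.cos θ ^ 2 + l2 * Real.sin θ ^ 2)⁻¹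
      = 2*π/Real.sqrt (l1*l2) := by
  set k := Real.sqrt (l2/l1) with hkdef
  have hk : 0 < k := Real.sqrt_pos.2 (div_pos h2 h1)
  have hk2 : k^2 = l2/l1 := Real.sq_sqrt (div_pos h2 h1).le
  have hrw : ∀ θ : ℝ, (l1 * Real.cos θ ^ 2 + l2 * Real.sin θ ^ 2)⁻¹
      = l1⁻¹ * (Real.cos θ ^ 2 + k^2 * Real.sin θ ^ 2)⁻¹ := by
    intro θ
    rw [hk2, ← mul_inv]
    congr 1
    field_simp
  simp only [hrw]
  rw [intervalIntegral.integral_const_mul, integral_k k hk]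
  rw [hkdef, Real.sqrt_div h2.le, Real.sqrt_mul h1.le]
  have e1 : Real.sqrt l1 * Real.sqrt l1 = l1 := Real.mul_self_sqrt h1.le
  have p1 : Real.sqrt l1 ≠ 0 := (Real.sqrt_pos.2 h1).ne'
  have p2 : Real.sqrt l2 ≠ 0 := (Real.sqrt_pos.2 h2).ne'
  rw [div_div_eq_mul_div]
  field_simp
  linear_combination e1


/-- The quadratic form `Q(θ) = β(α+γ)cos²θ + 2αβ sinθ cosθ + α(β+γ)sin²θ` is strictly
positive, and the period of the Lotka–Volterra orbit degenerated to the fixed point is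
`T(κ̃) = ∫_0^{2π} s/Q(θ) dθ = 2π √(s/(αβγ))`, where `s = α + β + γ`. -/
theorem period_at_fixed_point (α β γ : ℝ) (hα : 0 < α) (hβ : 0 < β) (hγ : 0 < γ)
    (s : ℝ) (hs : s = α + β + γ) (Q : ℝ → ℝ)
    (hQ : ∀ θ, Q θ = β * (α + γ) * Real.cos θ ^ 2 +
        2 * α * β * Real.sin θ * Real.cos θ + α * (β + γ) * Real.sin θ ^ 2) :
    (∀ θ, 0 < Q θ) ∧
      ∫ θ in (0 : ℝ)..(2 * Real.pi), s / Q θ =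
        2 * Real.pi * Real.sqrt (s / (α * β * γ)) := by
  have hs0 : 0 < s := by rw [hs]; linarith
  obtain ⟨a, hadef⟩ : ∃ a : ℝ, a = β*(α+γ) := ⟨_, rfl⟩
  obtain ⟨b, hbdef⟩ : ∃ b : ℝ, b = α*β := ⟨_, rfl⟩
  obtain ⟨cq, hcdef⟩ : ∃ cq : ℝ, cq = α*(β+γ) := ⟨_, rfl⟩
  have ha : 0 < a := by rw [hadef]; positivity
  have hb : 0 < b := by rw [hbdef]; positivity
  have hc : 0 < cq := by rw [hcdef]; positivity
  have hD : a*cq - b^2 = α*β*γ*s := by rw [hs, hadef, hbdef, hcdef]; ring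
  have hDpos : 0 < a*cq - b^2 := by rw [hD]; positivity
  have hQ' : ∀ θ, Q θ = a*Real.cos θ^2 + 2*b*Real.sin θ*Real.cos θ + cq*Real.sin θ^2 :=
    fun θ => by rw [hQ θ, hadef, hbdef, hcdef]; ring
  have hQpos : ∀ θ, 0 < Q θ := by
    intro θ
    rw [hQ' θ]
    nlinarith [sq_nonneg (a*Real.cos θ + b*Real.sin θ),
      sq_nonneg (cq*Real.sin θ + b*Real.cos θ), Real.sin_sq_add_cos_sq θ, hDpos, ha, hc,
      mul_pos ha hc]
  refine ⟨hQpos, ?_⟩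
  obtain ⟨p, hpdef⟩ : ∃ p : ℝ, p = (a+cq)/2 := ⟨_, rfl⟩
  obtain ⟨q, hqdef⟩ : ∃ q : ℝ, q = (a-cq)/2 := ⟨_, rfl⟩
  have hp : 0 < p := by rw [hpdef]; linarith
  have hpq : p^2 - q^2 = a*cq := by rw [hpdef, hqdef]; ring
  obtain ⟨R, hRdef⟩ : ∃ R : ℝ, R = Real.sqrt (q^2+b^2) := ⟨_, rfl⟩
  have hR2 : R^2 = q^2+b^2 := by rw [hRdef]; exact Real.sq_sqrt (by positivity)
  have hRpos : 0 < R := by rw [hRdef]; exact Real.sqrt_pos.2 (by positivity)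
  have hpR : R < p := by nlinarith [hR2, hDpos, hpq, hRpos, hp]
  have hq1 : -1 ≤ q/R := by
    rw [le_div_iff₀ hRpos]; nlinarith [hR2, sq_nonneg (q+R), sq_nonneg b]
  have hq2 : q/R ≤ 1 := by
    rw [div_le_iff₀ hRpos]; nlinarith [hR2, sq_nonneg (q-R), sq_nonneg b]
  obtain ⟨φ, hφdef⟩ : ∃ φ : ℝ, φ = Real.arccos (q/R) := ⟨_, rfl⟩
  have hcosφ : Real.cos φ = q/R := by rw [hφdef]; exact Real.cos_arccos hq1 hq2
  have hsinφ : Real.sin φ = b/R := by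
    rw [hφdef, Real.sin_arccos, show 1 - (q/R)^2 = (b/R)^2 by
      field_simp; linear_combination hR2]
    exact Real.sqrt_sq (by positivity)
  have hQ2 : ∀ θ, Q θ = p + q * Real.cos (2*θ) + b * Real.sin (2*θ) := by
    intro θ
    rw [hQ' θ, Real.cos_two_mul, Real.sin_two_mul]
    linear_combination cq * Real.sin_sq_add_cos_sq θ
      + (1 - 2*Real.cos θ^2) * hqdef - hpdef
  have hrot : ∀ u : ℝ, Q (u + φ/2) = (p+R)*Real.cos u^2 + (p-R)*Real.sin u^2 := by
    intro u
    rw [hQ2 (u+φ/2), show 2*(u+φ/2) = 2*u+φ from by ring, Real.cos_add, Real.sin_add,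
      hcosφ, hsinφ, Real.cos_two_mul, Real.sin_two_mul]
    field_simp
    linear_combination (R^2 - p*R) * Real.sin_sq_add_cos_sq u
      + (1 - 2*Real.cos u^2) * hR2
  have hper : Function.Periodic (fun θ => (Q θ)⁻¹) (2*π) := by
    intro θ
    simp only
    rw [hQ' (θ + 2*π), hQ' θ, Real.sin_add_two_pi, Real.cos_add_two_pi]
  have step1 : ∫ θ in (0:ℝ)..(2*π), s / Q θ = s * ∫ θ in (0:ℝ)..(2*π), (Q θ)⁻¹ := by
    simp only [div_eq_mul_inv]
    exact intervalIntegral.integral_const_mul s _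
  have step2 : ∫ θ in (0:ℝ)..(2*π), (Q θ)⁻¹
      = ∫ θ in (φ/2)..(φ/2 + 2*π), (Q θ)⁻¹ := by
    have := hper.intervalIntegral_add_eq 0 (φ/2)
    simpa using this
  have step3 : ∫ θ in (φ/2)..(φ/2 + 2*π), (Q θ)⁻¹
      = ∫ u in (0:ℝ)..(2*π), (Q (u + φ/2))⁻¹ := by
    rw [intervalIntegral.integral_comp_add_right (fun x => (Q x)⁻¹) (φ/2)]
    rw [zero_add, add_comm (2*π) (φ/2)]
  have step4 : ∫ u in (0:ℝ)..(2*π), (Q (u + φ/2))⁻¹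
      = ∫ u in (0:ℝ)..(2*π), ((p+R)*Real.cos u^2 + (p-R)*Real.sin u^2)⁻¹ := by
    apply intervalIntegral.integral_congr
    intro u _
    show (Q (u + φ/2))⁻¹ = ((p+R)*Real.cos u^2 + (p-R)*Real.sin u^2)⁻¹
    rw [hrot u]
  have hl1 : 0 < p + R := by linarith
  have hl2 : 0 < p - R := by linarith
  have step5 := integral_two (p+R) (p-R) hl1 hl2
  have hprod : (p+R)*(p-R) = α*β*γ*s := by
    rw [← hD]; linear_combination -hR2 + hpq
  rw [step1, step2, step3, step4, step5, hprod]
  rw [Real.sqrt_mul (by positivity : (0:ℝ) ≤ α*β*γ) s,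
    Real.sqrt_div (le_of_lt hs0) (α*β*γ)]
  have hss : Real.sqrt s * Real.sqrt s = s := Real.mul_self_sqrt hs0.le
  have n1 : Real.sqrt (α*β*γ) ≠ 0 := (Real.sqrt_pos.2 (by positivity)).ne'
  have n2 : Real.sqrt s ≠ 0 := (Real.sqrt_pos.2 hs0).ne'
  have hss2 : Real.sqrt s ^ 2 = s := Real.sq_sqrt hs0.le
  field_simp
  linear_combination -hss2
end
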